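/- arXiv:1301.2439 — 2 statements merged into one kernel-verified Lean document; each statement's English description precedes it below -/
import Mathlib

section
/- Let u be a 1-bounded τ-morphism of a Banach scale E with constant N¹_s(u) satisfying 3 N¹_s(u) < s for all s ≤ τ. Then for every s ∈ (0,τ], every λ ∈ (0, 1 − 3N¹_s(u)/s), and every x ∈ E_s, the exponential series Σ_{j≥0} uʲ(x)/j! converges absolutely in E_{λs} and satisfies |e^u x|_{λs} ≤ (1 − 3N¹_s(u)/((1−λ)s))^{-1} |x|_s. -/
open scoped ENNReal NNReal
open Filter

/-- An `S`-scale of Banach spaces, modelled by an extended-real-valued norm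
`N s` on an ambient vector space `E`; `N s x = ∞` means `x ∉ E_s`.
The inclusions `E_{s'} ⊆ E_s` for `s ≤ s'` are norm-nonincreasing (`mono`),
each `E_s` is complete (`complete`) and separated (`eq_zero`). -/
structure BanachScale (E : Type*) [AddCommGroup E] [Module ℂ E] (S : ℝ) where
  N : ℝ → E → ℝ≥0∞
  n_zero : ∀ s, N s 0 = 0
  n_neg : ∀ s x, N s (-x) = N s x
  n_add : ∀ s x y, N s (x + y) ≤ N s x + N s y
  n_smul : ∀ s (c : ℂ) x, N s (c • x) = (‖c‖₊ : ℝ≥0∞) * N s x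
  mono : ∀ ⦃s s' : ℝ⦄, s ≤ s' → ∀ x, N s x ≤ N s' x
  eq_zero : ∀ x, (∀ s, 0 < s → N s x = 0) → x = 0
  complete : ∀ s : ℝ, 0 < s → ∀ f : ℕ → E, (∀ n, N s (f n) ≠ ∞) →
    (∀ ε : ℝ≥0∞, 0 < ε → ∃ M, ∀ m n, M ≤ m → M ≤ n → N s (f m - f n) < ε) →
    ∃ y : E, Tendsto (fun n => N s (f n - y)) atTop (nhds 0)

/-- `u` is a `k`-bounded `τ`-morphism with constant `C` between the scales
`scE` and `scF`:  `|u x|_s ≤ C σ⁻ᵏ |x|_{s+σ}` for `s ∈ (0,τ)`, `σ ∈ (0,τ-s]`. -/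
def IsBdd {E F : Type*} [AddCommGroup E] [Module ℂ E] [AddCommGroup F] [Module ℂ F]
    {S S' : ℝ} (scE : BanachScale E S) (scF : BanachScale F S')
    (τ : ℝ) (k : ℕ) (C : ℝ≥0) (u : E →ₗ[ℂ] F) : Prop :=
  ∀ s σ : ℝ, 0 < s → 0 < σ → s + σ ≤ τ → ∀ x : E,
    scF.N s (u x) ≤ (C : ℝ≥0∞) * ((ENNReal.ofReal σ)⁻¹) ^ k * scE.N (s + σ) x

/-- Partial sums of the exponential series of `u` applied to `x`. -/
noncomputable def expPartial {E : Type*} [AddCommGroup E] [Module ℂ E]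
    (u : Module.End ℂ E) (n : ℕ) (x : E) : E :=
  ∑ j ∈ Finset.range n, ((j.factorial : ℂ)⁻¹) • ((u ^ j) x)


lemma BanachScale.n_sum_le {E : Type*} [AddCommGroup E] [Module ℂ E] {S : ℝ}
    (sc : BanachScale E S) (s : ℝ) (t : Finset ℕ) (f : ℕ → E) :
    sc.N s (∑ i ∈ t, f i) ≤ ∑ i ∈ t, sc.N s (f i) := by
  induction t using Finset.cons_induction with
  | empty => simp [sc.n_zero]
  | cons i t hi ih =>
    rw [Finset.sum_cons, Finset.sum_cons]
    exact le_trans (sc.n_add s _ _) (add_le_add le_rfl ih)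

lemma BanachScale.n_sub_le {E : Type*} [AddCommGroup E] [Module ℂ E] {S : ℝ}
    (sc : BanachScale E S) (s : ℝ) (x y : E) :
    sc.N s (x - y) ≤ sc.N s x + sc.N s y := by
  rw [sub_eq_add_neg]
  exact le_trans (sc.n_add s _ _) (by rw [sc.n_neg])

lemma iter_bound {E : Type*} [AddCommGroup E] [Module ℂ E] {S : ℝ}
    (sc : BanachScale E S) (s : ℝ) (Cs : ℝ≥0) (u : Module.End ℂ E)
    (hb : IsBdd sc sc s 1 Cs u) (σ : ℝ) (hσ : 0 < σ) :
    ∀ j : ℕ, ∀ s' : ℝ, 0 < s' → s' + j * σ ≤ s → ∀ x : E,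
      sc.N s' ((u ^ j) x) ≤ ((Cs : ℝ≥0∞) * (ENNReal.ofReal σ)⁻¹) ^ j * sc.N (s' + j * σ) x := by
  intro j
  induction j with
  | zero => intro s' hs' _ x; simp
  | succ j ih =>
    intro s' hs' hle x
    have hjσ : (0:ℝ) ≤ j * σ := by positivity
    have h1 : s' + σ ≤ s := by push_cast at hle; nlinarith
    have h2 : (s' + σ) + j * σ ≤ s := by push_cast at hle ⊢; linarith
    have happ : (u ^ (j+1)) x = u ((u ^ j) x) := by
      rw [pow_succ']; rfl
    rw [happ]
    calc sc.N s' (u ((u ^ j) x))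
        ≤ (Cs : ℝ≥0∞) * ((ENNReal.ofReal σ)⁻¹) ^ 1 * sc.N (s' + σ) ((u ^ j) x) :=
          hb s' σ hs' hσ h1 _
      _ ≤ (Cs : ℝ≥0∞) * ((ENNReal.ofReal σ)⁻¹) ^ 1 *
            (((Cs : ℝ≥0∞) * (ENNReal.ofReal σ)⁻¹) ^ j * sc.N ((s' + σ) + j * σ) x) := by
          gcongr
          exact ih (s' + σ) (by linarith) h2 x
      _ = ((Cs : ℝ≥0∞) * (ENNReal.ofReal σ)⁻¹) ^ (j+1) * sc.N ((s' + σ) + j * σ) x := by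
          ring
      _ = ((Cs : ℝ≥0∞) * (ENNReal.ofReal σ)⁻¹) ^ (j+1) * sc.N (s' + ((j+1:ℕ):ℝ) * σ) x := by
          congr 2; push_cast; ring
lemma pow_self_le_three_pow_mul_factorial (j : ℕ) : (j:ℝ)^j ≤ 3^j * j.factorial := by
  have h1 : (j:ℝ)^j / j.factorial ≤ Real.exp j := by
    calc (j:ℝ)^j / j.factorial
        ≤ ∑ i ∈ Finset.range (j+1), (j:ℝ)^i / i.factorial :=
          Finset.single_le_sum (f := fun i => (j:ℝ)^i / (i.factorial : ℝ))
            (fun i _ => by positivity) (Finset.self_mem_range_succ j)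
      _ ≤ Real.exp j := Real.sum_le_exp_of_nonneg (by positivity) _
  have h2 : Real.exp j ≤ 3^j := by
    have : Real.exp (j : ℝ) = Real.exp 1 ^ j := by
      rw [← Real.exp_nat_mul]; norm_num
    rw [this]
    exact pow_le_pow_left₀ (Real.exp_pos 1).le
      (le_of_lt (lt_trans Real.exp_one_lt_d9 (by norm_num))) j
  have hf : (0:ℝ) < j.factorial := by positivity
  calc (j:ℝ)^j = (j:ℝ)^j / j.factorial * j.factorial := by field_simp
    _ ≤ 3^j * j.factorial := by
        apply mul_le_mul_of_nonneg_right (h1.trans h2) hf.le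


lemma term_bound {E : Type*} [AddCommGroup E] [Module ℂ E] {S : ℝ}
    (sc : BanachScale E S) (s : ℝ) (hs : 0 < s) (Cs : ℝ≥0) (u : Module.End ℂ E)
    (hb : IsBdd sc sc s 1 Cs u) (lam : ℝ) (hlam : 0 < lam) (hlam1 : lam < 1) (x : E)
    (j : ℕ) :
    sc.N (lam * s) (((j.factorial : ℂ)⁻¹) • ((u ^ j) x)) ≤
      (ENNReal.ofReal (3 * (Cs:ℝ) / ((1 - lam) * s))) ^ j * sc.N s x := by
  have hbpos : (0:ℝ) < (1 - lam) * s := by nlinarith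
  rcases Nat.eq_zero_or_pos j with hj | hj
  · subst hj
    simpa using sc.mono (by nlinarith : lam * s ≤ s) x
  · have hjR : (0:ℝ) < (j:ℝ) := by exact_mod_cast hj
    set σ : ℝ := (1 - lam) * s / j with hσdef
    have hσ : 0 < σ := by positivity
    have hsum : lam * s + (j:ℝ) * σ = s := by rw [hσdef, mul_div_assoc', mul_div_cancel_left₀ _ hjR.ne']; ring
    have hiter := iter_bound sc s Cs u hb σ hσ j (lam * s) (by positivity)
      (by rw [hsum]) x
    rw [hsum] at hiter
    have hsm : sc.N (lam * s) (((j.factorial : ℂ)⁻¹) • ((u ^ j) x)) =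
        ((j.factorial : ℝ≥0∞))⁻¹ * sc.N (lam * s) ((u ^ j) x) := by
      rw [sc.n_smul]
      congr 1
      rw [nnnorm_inv]
      rw [ENNReal.coe_inv (by simp [Nat.factorial_ne_zero])]
      congr 1
      simp
    rw [hsm]
    calc ((j.factorial : ℝ≥0∞))⁻¹ * sc.N (lam * s) ((u ^ j) x)
        ≤ ((j.factorial : ℝ≥0∞))⁻¹ *
            (((Cs : ℝ≥0∞) * (ENNReal.ofReal σ)⁻¹) ^ j * sc.N s x) := by gcongr
      _ = ((j.factorial : ℝ≥0∞))⁻¹ * ((Cs : ℝ≥0∞) * (ENNReal.ofReal σ)⁻¹) ^ j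
            * sc.N s x := by ring
      _ ≤ (ENNReal.ofReal (3 * (Cs:ℝ) / ((1 - lam) * s))) ^ j * sc.N s x := by
          gcongr ?_ * _
          -- reduce to a real inequality
          have e1 : (ENNReal.ofReal σ)⁻¹ = ENNReal.ofReal σ⁻¹ :=
            (ENNReal.ofReal_inv_of_pos hσ).symm
          have e2 : ((Cs : ℝ≥0∞)) = ENNReal.ofReal (Cs:ℝ) :=
            ENNReal.ofReal_coe_nnreal.symm
          have e3 : ((j.factorial : ℝ≥0∞))⁻¹ = ENNReal.ofReal ((j.factorial:ℝ))⁻¹ := by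
            rw [ENNReal.ofReal_inv_of_pos (by positivity)]
            congr 1
            simp [ENNReal.ofReal_natCast]
          rw [e1, e2, e3, ← ENNReal.ofReal_mul (by positivity), ← ENNReal.ofReal_pow
            (by positivity), ← ENNReal.ofReal_mul (by positivity), ← ENNReal.ofReal_pow
            (by positivity)]
          apply ENNReal.ofReal_le_ofReal
          have hσinv : σ⁻¹ = (j:ℝ) / ((1 - lam) * s) := by
            rw [hσdef, inv_div]
          rw [hσinv, mul_div_assoc']
          rw [div_pow, div_pow, ← mul_div_assoc]
          rw [div_le_div_iff₀ (by positivity) (by positivity)]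
          have key := pow_self_le_three_pow_mul_factorial j
          have hCp : (0:ℝ) ≤ (Cs:ℝ)^j := by positivity
          have hfp : (0:ℝ) < (j.factorial : ℝ) := by positivity
          have h2 : ((Cs:ℝ) * (j:ℝ))^j ≤ (3 * (Cs:ℝ))^j * (j.factorial : ℝ) := by
            rw [mul_pow, mul_pow]
            calc (Cs:ℝ)^j * (j:ℝ)^j ≤ (Cs:ℝ)^j * (3^j * j.factorial) := by
                  exact mul_le_mul_of_nonneg_left key hCp
              _ = 3^j * (Cs:ℝ)^j * j.factorial := by ring
          calc (j.factorial:ℝ)⁻¹ * ((Cs:ℝ) * (j:ℝ))^j * ((1-lam)*s)^j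
              ≤ (j.factorial:ℝ)⁻¹ * ((3 * (Cs:ℝ))^j * j.factorial) * ((1-lam)*s)^j := by
                have := mul_le_mul_of_nonneg_left h2 (by positivity : (0:ℝ) ≤ (j.factorial:ℝ)⁻¹)
                exact mul_le_mul_of_nonneg_right this (by positivity)
            _ = (3 * (Cs:ℝ))^j * (((1-lam)*s)^j * (j.factorial:ℝ)⁻¹ * j.factorial) := by ring
            _ = (3 * (Cs:ℝ))^j * ((1-lam)*s)^j := by
                rw [mul_assoc, inv_mul_cancel₀ hfp.ne']; ring


/-- Convergence of the exponential series: if `u` is a `1`-bounded `τ`-morphism with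
constants `N¹_s(u) = C s` satisfying `3 C s < s` for all `s ≤ τ`, then for `s ∈ (0,τ]`,
`λ ∈ (0, 1 - 3 C s / s)` and `x ∈ E_s`, the series `Σ uʲ x / j!` converges absolutely
in `E_{λ s}` to some `y` with `|y|_{λs} ≤ (1 - 3 C s/((1-λ)s))⁻¹ |x|_s`. -/
theorem exp_series_converges {E : Type*} [AddCommGroup E] [Module ℂ E] {S : ℝ}
    (sc : BanachScale E S) (τ : ℝ) (hτ : 0 < τ)
    (u : Module.End ℂ E) (C : ℝ → ℝ≥0)
    (hb : ∀ s : ℝ, 0 < s → s ≤ τ → IsBdd sc sc s 1 (C s) u)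
    (hsmall : ∀ s : ℝ, 0 < s → s ≤ τ → 3 * (C s : ℝ) < s) :
    ∀ s : ℝ, 0 < s → s ≤ τ → ∀ lam : ℝ, 0 < lam → lam < 1 - 3 * (C s : ℝ) / s →
      ∀ x : E, sc.N s x ≠ ∞ →
        (∑' j : ℕ, sc.N (lam * s) (((j.factorial : ℂ)⁻¹) • ((u ^ j) x))) ≠ ∞ ∧
        ∃ y : E,
          Tendsto (fun n => sc.N (lam * s) (expPartial u n x - y)) atTop (nhds 0) ∧
          sc.N (lam * s) y ≤
            ENNReal.ofReal (1 / (1 - 3 * (C s : ℝ) / ((1 - lam) * s))) * sc.N s x := by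
  intro s hs hsτ lam hlam hlam2 x hx
  have hC3 : 3 * (C s : ℝ) < s := hsmall s hs hsτ
  have hCnn : (0:ℝ) ≤ (C s : ℝ) := (C s).coe_nonneg
  have hdiv0 : 0 ≤ 3 * (C s : ℝ) / s := by positivity
  have hlam1 : lam < 1 := by linarith
  have h1l : 0 < 1 - lam := by linarith
  have hbpos : (0:ℝ) < (1 - lam) * s := by positivity
  set a : ℝ := 3 * (C s : ℝ) / ((1 - lam) * s) with hadef
  have ha0 : 0 ≤ a := by positivity
  have ha1 : a < 1 := by
    rw [hadef, div_lt_one hbpos]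
    have : 3 * (C s : ℝ) / s < 1 - lam := by linarith
    rw [div_lt_iff₀ hs] at this
    nlinarith
  set r : ℝ≥0∞ := ENNReal.ofReal a with hrdef
  have hr1 : r < 1 := by rw [hrdef]; exact ENNReal.ofReal_lt_one.mpr ha1
  set g : ℕ → ℝ≥0∞ := fun j => sc.N (lam * s) (((j.factorial : ℂ)⁻¹) • ((u ^ j) x))
    with hgdef
  have hkey : ∀ j, g j ≤ r ^ j * sc.N s x := fun j =>
    term_bound sc s hs (C s) u (hb s hs hsτ) lam hlam hlam1 x j
  have htsum : ∑' j, g j ≤ (1 - r)⁻¹ * sc.N s x := by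
    calc ∑' j, g j ≤ ∑' j, r ^ j * sc.N s x := ENNReal.tsum_le_tsum hkey
      _ = (∑' j : ℕ, r ^ j) * sc.N s x := ENNReal.tsum_mul_right
      _ = (1 - r)⁻¹ * sc.N s x := by rw [ENNReal.tsum_geometric]
  have hfin : (1 - r)⁻¹ * sc.N s x ≠ ∞ :=
    ENNReal.mul_ne_top (ENNReal.inv_ne_top.mpr (tsub_pos_of_lt hr1).ne') hx
  have htne : (∑' j, g j) ≠ ∞ := ne_top_of_le_ne_top hfin htsum
  refine ⟨htne, ?_⟩
  set f : ℕ → E := fun n => expPartial u n x with hfdef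
  have hNf : ∀ n, sc.N (lam * s) (f n) ≤ ∑ j ∈ Finset.range n, g j := fun n =>
    sc.n_sum_le _ _ _
  have hNfB : ∀ n, sc.N (lam * s) (f n) ≤ (1 - r)⁻¹ * sc.N s x := fun n =>
    (hNf n).trans ((ENNReal.sum_le_tsum _).trans htsum)
  have hNfne : ∀ n, sc.N (lam * s) (f n) ≠ ∞ := fun n => ne_top_of_le_ne_top hfin (hNfB n)
  have hdiff : ∀ m n, n ≤ m → sc.N (lam * s) (f m - f n) ≤ ∑ j ∈ Finset.Ico n m, g j := by
    intro m n h
    have he : f m - f n = ∑ j ∈ Finset.Ico n m, ((j.factorial : ℂ)⁻¹) • ((u ^ j) x) := by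
      rw [hfdef]
      simp only [expPartial]
      rw [Finset.sum_Ico_eq_sub _ h]
    rw [he]
    exact sc.n_sum_le _ _ _
  have htail := ENNReal.tendsto_sum_nat_add g htne
  have hcauchy : ∀ ε : ℝ≥0∞, 0 < ε → ∃ M, ∀ m n, M ≤ m → M ≤ n →
      sc.N (lam * s) (f m - f n) < ε := by
    intro ε hε
    have hev : ∀ᶠ i in atTop, (∑' k, g (k + i)) < ε := htail.eventually_lt_const hε
    obtain ⟨M, hM⟩ := eventually_atTop.mp hev
    refine ⟨M, ?_⟩
    have hbound : ∀ m n, M ≤ n → n ≤ m → sc.N (lam * s) (f m - f n) < ε := by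
      intro m n hMn hnm
      calc sc.N (lam * s) (f m - f n) ≤ ∑ j ∈ Finset.Ico n m, g j := hdiff m n hnm
        _ ≤ ∑ j ∈ Finset.Ico M m, g j :=
            Finset.sum_le_sum_of_subset (Finset.Ico_subset_Ico hMn le_rfl)
        _ = ∑ k ∈ Finset.range (m - M), g (M + k) := Finset.sum_Ico_eq_sum_range _ _ _
        _ ≤ ∑' k, g (M + k) := ENNReal.sum_le_tsum _
        _ = ∑' k, g (k + M) := tsum_congr fun k => by rw [add_comm]
        _ < ε := hM M le_rfl
    intro m n hm hn
    rcases le_total n m with h | h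
    · exact hbound m n hn h
    · rw [← sc.n_neg, neg_sub]
      exact hbound n m hm h
  obtain ⟨y, hy⟩ := sc.complete (lam * s) (by positivity) f hNfne hcauchy
  refine ⟨y, hy, ?_⟩
  have hofr : ENNReal.ofReal (1 / (1 - a)) = (1 - r)⁻¹ := by
    rw [one_div, ENNReal.ofReal_inv_of_pos (by linarith : (0:ℝ) < 1 - a)]
    congr 1
    rw [ENNReal.ofReal_sub 1 ha0, ENNReal.ofReal_one]
  rw [hofr]
  have hle : ∀ n, sc.N (lam * s) y ≤ sc.N (lam * s) (f n - y) + (1 - r)⁻¹ * sc.N s x := by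
    intro n
    have he : y = f n - (f n - y) := by abel
    calc sc.N (lam * s) y = sc.N (lam * s) (f n - (f n - y)) := by rw [← he]
      _ ≤ sc.N (lam * s) (f n) + sc.N (lam * s) (f n - y) := sc.n_sub_le _ _ _
      _ ≤ (1 - r)⁻¹ * sc.N s x + sc.N (lam * s) (f n - y) := by gcongr; exact hNfB n
      _ = sc.N (lam * s) (f n - y) + (1 - r)⁻¹ * sc.N s x := by ring
  have hlim : Tendsto (fun n => sc.N (lam * s) (f n - y) + (1 - r)⁻¹ * sc.N s x) atTop
      (nhds ((1 - r)⁻¹ * sc.N s x)) := by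
    have := hy.add_const ((1 - r)⁻¹ * sc.N s x)
    simpa using this
  exact ge_of_tendsto' hlim hle
end

section
/- Let (y_k) and (x_k) be sequences of germs of holomorphic functions at 0 in ℂ, and let a be a nonzero germ with y_k = a·x_k for all k. If (y_k) converges (uniformly on a neighborhood of 0), then (x_k) converges as well. Consequently, for any a ∈ O_{ℂ,0}, the image of multiplication by a is a closed subspace of O_{ℂ,0}. -/
open Filter Metric Topology

/-- Division by a fixed nonzero germ is sequentially continuous: if `y_k = a·x_k`
with `a` holomorphic and not identically zero near `0`, all `x_k` holomorphic, and
`(y_k)` converges uniformly near `0`, then `(x_k)` converges uniformly on a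
(possibly smaller) neighborhood of `0`, and the limit of `(y_k)` is again a
multiple of `a`; hence the image of multiplication by `a` is closed in `O_{ℂ,0}`. -/
theorem mul_germ_image_closed (r : ℝ) (hr : 0 < r)
    (a : ℂ → ℂ) (ha : DifferentiableOn ℂ a (ball (0 : ℂ) r))
    (ha0 : ∃ w ∈ ball (0 : ℂ) r, a w ≠ 0)
    (x y : ℕ → ℂ → ℂ)
    (hx : ∀ k, DifferentiableOn ℂ (x k) (ball (0 : ℂ) r))
    (hxy : ∀ k, ∀ w ∈ ball (0 : ℂ) r, y k w = a w * x k w)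
    (ylim : ℂ → ℂ)
    (hy : TendstoUniformlyOn y ylim atTop (ball (0 : ℂ) r)) :
    ∃ r' : ℝ, 0 < r' ∧ r' ≤ r ∧
      ∃ xlim : ℂ → ℂ,
        TendstoUniformlyOn x xlim atTop (ball (0 : ℂ) r') ∧
        ∀ w ∈ ball (0 : ℂ) r', ylim w = a w * xlim w := by
  have haA : AnalyticOnNhd ℂ a (ball (0 : ℂ) r) := ha.analyticOnNhd isOpen_ball
  -- find a sphere of radius ρ = r/(n+3) on which a has no zero
  obtain ⟨n, hn⟩ : ∃ n : ℕ, ∀ w : ℂ, ‖w‖ = r / (n + 3) → a w ≠ 0 := by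
    by_contra h
    push_neg at h
    choose w hwn hwz using h
    have hpos : ∀ n : ℕ, (0 : ℝ) < r / (n + 3) := fun n =>
      div_pos hr (by positivity)
    have hw0 : ∀ n : ℕ, w n ≠ 0 := fun n => by
      intro h0
      have := hwn n
      rw [h0, norm_zero] at this
      exact (hpos n).ne this
    have hlim : Filter.Tendsto w atTop (𝓝[≠] (0 : ℂ)) := by
      rw [tendsto_nhdsWithin_iff]
      constructor
      · rw [tendsto_zero_iff_norm_tendsto_zero]
        simp only [hwn]
        have h1 : Filter.Tendsto (fun n : ℕ => ((n : ℝ) + 3)) atTop atTop :=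
          tendsto_atTop_add_const_right _ _ tendsto_natCast_atTop_atTop
        exact Filter.Tendsto.div_atTop tendsto_const_nhds h1
      · exact Filter.Eventually.of_forall fun n => hw0 n
    have hfreq : ∃ᶠ z in 𝓝[≠] (0 : ℂ), a z = 0 :=
      hlim.frequently (Filter.Frequently.of_forall hwz)
    have heq : Set.EqOn a 0 (ball (0 : ℂ) r) :=
      haA.eqOn_zero_of_preconnected_of_frequently_eq_zero
        (convex_ball (0 : ℂ) r).isPreconnected (mem_ball_self hr) hfreq
    obtain ⟨w₀, hw₀, hw₀ne⟩ := ha0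
    exact hw₀ne (heq hw₀)
  set ρ : ℝ := r / (n + 3) with hρdef
  have hρ0 : 0 < ρ := div_pos hr (by positivity)
  have hρr : ρ < r := by
    rw [hρdef, div_lt_iff₀ (by positivity)]
    nlinarith
  have hsub : sphere (0 : ℂ) ρ ⊆ ball (0 : ℂ) r := fun w hw => by
    rw [mem_sphere_zero_iff_norm] at hw
    rw [mem_ball_zero_iff, hw]; exact hρr
  have hballsub : ball (0 : ℂ) ρ ⊆ ball (0 : ℂ) r := ball_subset_ball hρr.le
  have hcbsub : closedBall (0 : ℂ) ρ ⊆ ball (0 : ℂ) r :=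
    closedBall_subset_ball hρr
  -- a is bounded below on the sphere
  obtain ⟨w₀, hw₀s, hw₀min'⟩ :=
    (isCompact_sphere (0 : ℂ) ρ).exists_isMinOn
      (NormedSpace.sphere_nonempty.2 hρ0.le)
      ((ha.continuousOn.mono hsub).norm)
  have hw₀min : ∀ w ∈ sphere (0 : ℂ) ρ, ‖a w₀‖ ≤ ‖a w‖ := fun w hw => hw₀min' hw
  set m : ℝ := ‖a w₀‖ with hmdef
  have hm0 : 0 < m := by
    have := hn w₀ (mem_sphere_zero_iff_norm.1 hw₀s)
    simpa [hmdef, norm_pos_iff] using this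
  -- x is uniformly Cauchy on ball ρ via the maximum principle
  have hycauchy : UniformCauchySeqOn y atTop (ball (0 : ℂ) r) :=
    hy.uniformCauchySeqOn
  have hxcauchy : UniformCauchySeqOn x atTop (ball (0 : ℂ) ρ) := by
    rw [Metric.uniformCauchySeqOn_iff]
    intro ε hε
    rw [Metric.uniformCauchySeqOn_iff] at hycauchy
    obtain ⟨N, hN⟩ := hycauchy (m * ε / 2) (by positivity)
    refine ⟨N, fun k hk l hl z hz => ?_⟩
    -- bound on the sphere
    have hbd : ∀ w ∈ sphere (0 : ℂ) ρ, ‖x k w - x l w‖ ≤ m * ε / 2 / m := by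
      intro w hw
      have hwball : w ∈ ball (0 : ℂ) r := hsub hw
      have hya : y k w - y l w = a w * (x k w - x l w) := by
        rw [hxy k w hwball, hxy l w hwball]; ring
      have hylt : ‖y k w - y l w‖ ≤ m * ε / 2 := by
        have := hN k hk l hl w hwball
        rw [dist_eq_norm] at this
        exact this.le
      have ham : m ≤ ‖a w‖ := hw₀min w hw
      have : ‖a w‖ * ‖x k w - x l w‖ ≤ m * ε / 2 := by
        rw [← norm_mul, ← hya]; exact hylt
      have h2 : m * ‖x k w - x l w‖ ≤ m * ε / 2 :=
        le_trans (by nlinarith [norm_nonneg (x k w - x l w)]) this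
      rw [le_div_iff₀ hm0]
      linarith [h2]
    -- maximum principle on the ball of radius ρ
    have hdiff : DiffContOnCl ℂ (fun w => x k w - x l w) (ball (0 : ℂ) ρ) := by
      constructor
      · exact ((hx k).mono hballsub).sub ((hx l).mono hballsub)
      · rw [closure_ball (0 : ℂ) hρ0.ne']
        exact (((hx k).mono hcbsub).sub ((hx l).mono hcbsub)).continuousOn
    have hmax : ‖x k z - x l z‖ ≤ m * ε / 2 / m := by
      refine Complex.norm_le_of_forall_mem_frontier_norm_le isBounded_ball hdiff
        (fun w hw => ?_) ?_
      · rw [frontier_ball (0 : ℂ) hρ0.ne'] at hw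
        exact hbd w hw
      · exact subset_closure hz
    rw [dist_eq_norm]
    calc ‖x k z - x l z‖ ≤ m * ε / 2 / m := hmax
      _ = ε / 2 := by field_simp
      _ < ε := by linarith
  -- pointwise limits
  have hptwise : ∀ z ∈ ball (0 : ℂ) ρ, CauchySeq (fun k => x k z) := by
    intro z hz
    rw [Metric.cauchySeq_iff]
    rw [Metric.uniformCauchySeqOn_iff] at hxcauchy
    intro ε hε
    obtain ⟨N, hN⟩ := hxcauchy ε hε
    exact ⟨N, fun k hk l hl => hN k hk l hl z hz⟩
  set xlim : ℂ → ℂ := fun z => limUnder atTop (fun k => x k z) with hxlimdef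
  have hxlim : ∀ z ∈ ball (0 : ℂ) ρ,
      Filter.Tendsto (fun k => x k z) atTop (𝓝 (xlim z)) := fun z hz =>
    (hptwise z hz).tendsto_limUnder
  refine ⟨ρ, hρ0, hρr.le, xlim, hxcauchy.tendstoUniformlyOn_of_tendsto hxlim, ?_⟩
  intro w hw
  have h1 : Filter.Tendsto (fun k => y k w) atTop (𝓝 (ylim w)) :=
    hy.tendsto_at (hballsub hw)
  have h2 : Filter.Tendsto (fun k => y k w) atTop (𝓝 (a w * xlim w)) := by
    have := (hxlim w hw).const_mul (a w)
    exact this.congr fun k => (hxy k w (hballsub hw)).symm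
  exact tendsto_nhds_unique h1 h2
end
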